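/- For every real number x with 0 < |x| ≤ 1/2, one has 1/(sin x)² ≤ 1/x² + 0.36 and 1/(sin x)² ≤ 1.1/x². -/

import Mathlib

lemma sin_ge_sub_cube_six {y : ℝ} (hy : 0 ≤ y) : y - y ^ 3 / 6 ≤ Real.sin y := by
  have key : MonotoneOn (fun t : ℝ => Real.sin t - t + t ^ 3 / 6) (Set.Ici 0) := by
    have hderiv : ∀ t : ℝ, HasDerivAt (fun t : ℝ => Real.sin t - t + t ^ 3 / 6)
        (Real.cos t - 1 + t ^ 2 / 2) t := by
      intro t
      have h1 := (Real.hasDerivAt_sin t).sub (hasDerivAt_id t)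
      have h2 := (hasDerivAt_pow 3 t).div_const 6
      have := h1.add h2
      have e : (fun t : ℝ => Real.sin t - t + t ^ 3 / 6) = Real.sin - id + fun x => x ^ 3 / 6 := by
        ext s; simp
      rw [e]
      refine this.congr_deriv ?_
      rw [show (3:ℕ) - 1 = 2 from rfl]
      push_cast
      ring
    apply monotoneOn_of_deriv_nonneg (convex_Ici 0)
    · exact (Continuous.continuousOn (by continuity))
    · intro t _
      exact (hderiv t).differentiableAt.differentiableWithinAt
    · intro t _
      rw [(hderiv t).deriv]
      have := Real.one_sub_sq_div_two_le_cos (x := t)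
      linarith
  have h0 : (fun t : ℝ => Real.sin t - t + t ^ 3 / 6) 0 ≤
      (fun t : ℝ => Real.sin t - t + t ^ 3 / 6) y :=
    key (Set.mem_Ici.2 le_rfl) (Set.mem_Ici.2 hy) hy
  simp at h0
  linarith

/-- For `0 < |x| ≤ 1/2` one has `csc² x ≤ 1/x² + 0.36` and `csc² x ≤ 1.1/x²`. -/
theorem csc_sq_bounds (x : ℝ) (hx : 0 < |x|) (hx2 : |x| ≤ 1 / 2) :
    (Real.sin x ^ 2)⁻¹ ≤ 1 / x ^ 2 + 0.36 ∧ (Real.sin x ^ 2)⁻¹ ≤ 1.1 / x ^ 2 := by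
  set y := |x| with hy
  have hy0 : 0 < y := hx
  have hsq : Real.sin x ^ 2 = Real.sin y ^ 2 := by
    rcases abs_cases x with ⟨h, _⟩ | ⟨h, _⟩
    · rw [hy, h]
    · rw [hy, h, Real.sin_neg]; ring
  have hx2' : x ^ 2 = y ^ 2 := (sq_abs x).symm
  have hs := sin_ge_sub_cube_six hy0.le
  have hLpos : 0 < y - y ^ 3 / 6 := by nlinarith
  have hsin2 : (y - y ^ 3 / 6) ^ 2 ≤ Real.sin x ^ 2 := by
    rw [hsq]; nlinarith
  have h1 : (Real.sin x ^ 2)⁻¹ ≤ ((y - y ^ 3 / 6) ^ 2)⁻¹ := by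
    apply inv_anti₀ (by positivity) hsin2
  have hq : y ^ 2 ≤ 1 / 4 := by nlinarith
  have hy4 : (0:ℝ) ≤ y ^ 4 := by positivity
  constructor
  · have h2 : ((y - y ^ 3 / 6) ^ 2)⁻¹ ≤ 1 / y ^ 2 + 0.36 := by
      rw [show (1:ℝ) / y ^ 2 + 0.36 = (1 + 0.36 * y ^ 2) / y ^ 2 by field_simp,
        inv_eq_one_div, div_le_div_iff₀ (by positivity) (by positivity)]
      have hfac : (0:ℝ) ≤ 2/75 - 83/900 * y ^ 2 + y ^ 4 / 100 := by nlinarith [sq_nonneg (y^2)]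
      nlinarith [mul_nonneg hy4 hfac]
    rw [hx2']
    exact h1.trans h2
  · have h2 : ((y - y ^ 3 / 6) ^ 2)⁻¹ ≤ 1.1 / y ^ 2 := by
      rw [inv_eq_one_div, div_le_div_iff₀ (by positivity) (by positivity)]
      have hfac : (0:ℝ) ≤ 1/10 - 11/30 * y ^ 2 + 11/360 * y ^ 4 := by nlinarith [sq_nonneg (y^2)]
      nlinarith [mul_nonneg (sq_nonneg y) hfac]
    rw [hx2']
    exact h1.trans h2
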